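/- Let A SPD in block form and P_id = [ -A_ff⁻¹A_fc ; I ]. Then the complementary coarse-grid-correction projector satisfies I - P_id(P_idᵀAP_id)⁻¹P_idᵀA = S(SᵀAS)⁻¹SᵀA = [[I, -W],[0, 0]] with W = -A_ff⁻¹A_fc, where S = [I;0]. -/

import Mathlib

open Matrix

/-- For `P_id = [W; I]` with `W = -A_ff⁻¹A_fc` and `S = [I; 0]`, the
complementary coarse-grid-correction projector satisfies
`I - P_id(P_idᵀAP_id)⁻¹P_idᵀA = S(SᵀAS)⁻¹SᵀA = [[I, -W],[0, 0]]`. -/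
theorem complementary_projector_block_form {nf nc : ℕ}
    (Aff : Matrix (Fin nf) (Fin nf) ℝ) (Afc : Matrix (Fin nf) (Fin nc) ℝ)
    (Acf : Matrix (Fin nc) (Fin nf) ℝ) (Acc : Matrix (Fin nc) (Fin nc) ℝ)
    (A : Matrix (Fin nf ⊕ Fin nc) (Fin nf ⊕ Fin nc) ℝ)
    (hA : A = Matrix.fromBlocks Aff Afc Acf Acc) (hApd : A.PosDef)
    (hAff : IsUnit Aff.det)
    (S : Matrix (Fin nf ⊕ Fin nc) (Fin nf) ℝ)
    (hS : S = Matrix.of (Sum.elim (1 : Matrix (Fin nf) (Fin nf) ℝ)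
      (0 : Matrix (Fin nc) (Fin nf) ℝ)))
    (W : Matrix (Fin nf) (Fin nc) ℝ) (hW : W = -(Aff⁻¹ * Afc))
    (Pid : Matrix (Fin nf ⊕ Fin nc) (Fin nc) ℝ)
    (hPid : Pid = Matrix.of (Sum.elim W (1 : Matrix (Fin nc) (Fin nc) ℝ))) :
    1 - Pid * (Pidᵀ * A * Pid)⁻¹ * Pidᵀ * A = S * (Sᵀ * A * S)⁻¹ * Sᵀ * A ∧
    S * (Sᵀ * A * S)⁻¹ * Sᵀ * A = Matrix.fromBlocks 1 (-W) 0 0 := by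
  have hS' : S = fromRows 1 0 := hS
  have hP' : Pid = fromRows W 1 := hPid
  -- symmetry of A
  have hherm : Aᴴ = A := hApd.1
  have htr : Aᵀ = A := by
    ext i j
    have h := congrFun (congrFun hherm i) j
    rw [transpose_apply]
    simpa [conjTranspose_apply] using h
  have hblk : Matrix.fromBlocks Affᵀ Acfᵀ Afcᵀ Accᵀ = Matrix.fromBlocks Aff Afc Acf Acc := by
    rw [← fromBlocks_transpose, ← hA, htr, hA]
  obtain ⟨hAffT, hAcfT, hAfcT, -⟩ := fromBlocks_inj.mp hblk
  -- compute with S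
  have hSAS : Sᵀ * A * S = Aff := by
    rw [hS', hA, transpose_fromRows, transpose_one, transpose_zero,
      fromCols_mul_fromBlocks, fromCols_mul_fromRows]
    simp
  have hSpart : S * (Sᵀ * A * S)⁻¹ * Sᵀ * A = Matrix.fromBlocks 1 (-W) 0 0 := by
    rw [hSAS, hS', hA, transpose_fromRows, transpose_one, transpose_zero,
      fromRows_mul, fromRows_mul_fromCols, fromBlocks_multiply]
    simp [Matrix.nonsing_inv_mul Aff hAff, hW, Matrix.mul_assoc]
  -- compute with Pid
  have hWT2 : Wᵀ = -(Acf * Aff⁻¹) := by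
    rw [hW, transpose_neg, transpose_mul, transpose_nonsing_inv, hAffT, hAfcT]
  have hWT : Wᵀ * Aff = -Acf := by
    rw [hWT2, Matrix.neg_mul, Matrix.mul_assoc, Matrix.nonsing_inv_mul Aff hAff,
      Matrix.mul_one]
  have hPA : Pidᵀ * A = fromCols 0 (Acc - Acf * Aff⁻¹ * Afc) := by
    rw [hP', hA, transpose_fromRows, transpose_one, fromCols_mul_fromBlocks,
      Matrix.one_mul, Matrix.one_mul, hWT, hWT2, Matrix.neg_mul,
      neg_add_cancel, neg_add_eq_sub]
  set Sc := Acc - Acf * Aff⁻¹ * Afc with hSc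
  have hPAP : Pidᵀ * A * Pid = Sc := by
    rw [hPA, hP', fromCols_mul_fromRows]
    simp
  -- Sc is PosDef
  have hScPD : Sc.PosDef := by
    rw [← hPAP]
    refine posDef_iff_dotProduct_mulVec.mpr ⟨?_, ?_⟩
    · have h := isHermitian_conjTranspose_mul_mul Pid hApd.1
      have hc : Pidᴴ = Pidᵀ := by ext i j; simp [conjTranspose_apply]
      rwa [hc] at h
    · intro x hx
      have hPx : Pid *ᵥ x ≠ 0 := by
        intro h
        apply hx
        funext i
        have := congrFun h (Sum.inr i)
        rw [hP'] at this
        simpa [fromRows_mulVec] using this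
      have := hApd.dotProduct_mulVec_pos hPx
      have hstar : (star x : Fin nc → ℝ) = x := by funext i; simp
      have hstar2 : (star (Pid *ᵥ x) : (Fin nf ⊕ Fin nc) → ℝ) = Pid *ᵥ x := by
        funext i; simp
      have key : dotProduct (star x) ((Pidᵀ * A * Pid) *ᵥ x)
          = dotProduct (star (Pid *ᵥ x)) (A *ᵥ (Pid *ᵥ x)) := by
        rw [hstar, hstar2, ← Matrix.mulVec_mulVec, ← Matrix.mulVec_mulVec,
          dotProduct_mulVec, vecMul_transpose]
      rw [key]
      exact this
  have hScUnit : IsUnit Sc.det := hScPD.isUnit.map (MonoidHom.id _) |>.map detMonoidHom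
  have hPpart : 1 - Pid * (Pidᵀ * A * Pid)⁻¹ * Pidᵀ * A = Matrix.fromBlocks 1 (-W) 0 0 := by
    have hmain : Pid * (Pidᵀ * A * Pid)⁻¹ * Pidᵀ * A = Matrix.fromBlocks 0 W 0 1 := by
      rw [hPAP, Matrix.mul_assoc, hPA, hP', fromRows_mul, fromRows_mul_fromCols]
      simp [Matrix.mul_assoc, Matrix.nonsing_inv_mul Sc hScUnit]
    rw [hmain, show (1 : Matrix (Fin nf ⊕ Fin nc) (Fin nf ⊕ Fin nc) ℝ) =
      Matrix.fromBlocks 1 0 0 1 from (fromBlocks_one).symm, sub_eq_add_neg,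
      fromBlocks_neg, fromBlocks_add]
    simp
  exact ⟨hPpart.trans hSpart.symm, hSpart⟩
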